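/- Let Ω be a set, k : Ω × Ω → ℝ, x₁, …, xₙ ∈ Ω, and Y ∈ ℝⁿ. Let G ∈ ℝ^{n×n} with G_{ij} = k(x_i, x_j), and assume G is symmetric positive definite. Let h₀ : Ω → ℝ and suppose h : Ω × [0, ∞) → ℝ satisfies h(x, 0) = h₀(x) and ∂ₜ h(x, t) = −Σᵢ₌₁ⁿ k(x, xᵢ)(h(xᵢ, t) − Yᵢ) for all x ∈ Ω and t ≥ 0 (with t ↦ h(xᵢ, t) differentiable for each i). Then for every x ∈ Ω, lim_{t→∞} h(x, t) = h₀(x) + Σᵢ,ⱼ k(x, xᵢ) (G⁻¹)_{ij} (Yⱼ − h₀(xⱼ)). -/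

import Mathlib

open Filter Topology Matrix


lemma exists_pos_lower {n : ℕ} (G : Matrix (Fin n) (Fin n) ℝ) (hG : G.PosDef) :
    ∃ c > 0, ∀ v : Fin n → ℝ, c * ∑ i, v i ^ 2 ≤ ∑ i, v i * ∑ j, G i j * v j := by
  rcases Nat.eq_zero_or_pos n with hn | hn
  · subst hn
    exact ⟨1, one_pos, fun v => by simp⟩
  have : Nonempty (Fin n) := ⟨⟨0, hn⟩⟩
  set f : EuclideanSpace ℝ (Fin n) → ℝ := fun v => ∑ i, v i * ∑ j, G i j * v j with hf
  have hcont : Continuous f := by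
    apply continuous_finset_sum
    intro i _
    exact ((continuous_apply i).comp (PiLp.continuous_ofLp 2 _)).mul
      (continuous_finset_sum _ fun j _ =>
        continuous_const.mul ((continuous_apply j).comp (PiLp.continuous_ofLp 2 _)))
  have hsph : IsCompact (Metric.sphere (0 : EuclideanSpace ℝ (Fin n)) 1) := isCompact_sphere _ _
  have hne : (Metric.sphere (0 : EuclideanSpace ℝ (Fin n)) 1).Nonempty :=
    NormedSpace.sphere_nonempty.2 zero_le_one
  obtain ⟨v₀, hv₀mem, hv₀min⟩ := hsph.exists_isMinOn hne hcont.continuousOn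
  have hv₀norm : ‖v₀‖ = 1 := by simpa using hv₀mem
  have hv₀ne : v₀ ≠ 0 := by intro h; rw [h] at hv₀norm; simp at hv₀norm
  have hc : 0 < f v₀ := by
    have := hG.dotProduct_mulVec_pos (x := WithLp.ofLp v₀)
      (by exact fun h => hv₀ne (by simpa using congrArg (WithLp.toLp 2) h))
    simpa [hf, dotProduct, star_trivial, Matrix.mulVec, Finset.mul_sum] using this
  refine ⟨f v₀, hc, fun v => ?_⟩
  by_cases hv : v = 0
  · simp [hv, hf]
  set w : EuclideanSpace ℝ (Fin n) := WithLp.toLp 2 v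
  have hwne : w ≠ 0 := fun h => hv (by simpa [w] using congrArg WithLp.ofLp h)
  have hnorm : ‖w‖ ≠ 0 := norm_ne_zero_iff.2 hwne
  have hmem : (‖w‖⁻¹ • w) ∈ Metric.sphere (0 : EuclideanSpace ℝ (Fin n)) 1 := by
    simp [norm_smul, abs_inv, inv_mul_cancel₀ hnorm, abs_of_nonneg (norm_nonneg w)]
  have hmin := hv₀min hmem
  have hfsmul : f (‖w‖⁻¹ • w) = ‖w‖⁻¹ ^ 2 * f w := by
    simp only [hf, PiLp.smul_apply, smul_eq_mul, Finset.mul_sum]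
    apply Finset.sum_congr rfl; intro i _
    apply Finset.sum_congr rfl; intro j _
    ring
  have hsum : ∑ i, v i ^ 2 = ‖w‖ ^ 2 := by
    rw [EuclideanSpace.norm_eq, Real.sq_sqrt (by positivity)]
    simp [sq_abs, w]
  rw [hsum]
  have h1 : f v₀ ≤ ‖w‖⁻¹ ^ 2 * f w := by rw [← hfsmul]; exact hmin
  have h2 : f v₀ * ‖w‖ ^ 2 ≤ f w := by
    have := mul_le_mul_of_nonneg_right h1 (sq_nonneg ‖w‖)
    calc f v₀ * ‖w‖ ^ 2 ≤ ‖w‖⁻¹ ^ 2 * f w * ‖w‖ ^ 2 := this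
      _ = f w := by field_simp
  exact h2


lemma flow_tendsto_zero {n : ℕ} (G : Matrix (Fin n) (Fin n) ℝ)
    (u : Fin n → ℝ → ℝ)
    (hud : ∀ i (t : ℝ), 0 ≤ t → HasDerivAt (u i) (-(∑ j, G i j * u j t)) t)
    (clam : ℝ) (hclam : 0 < clam)
    (hlow : ∀ v : Fin n → ℝ, clam * ∑ i, v i ^ 2 ≤ ∑ i, v i * ∑ j, G i j * v j) :
    ∀ j, Tendsto (fun t => u j t) atTop (𝓝 0) := by
  set V : ℝ → ℝ := fun t => ∑ i, u i t ^ 2 with hV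
  have hVd : ∀ t : ℝ, 0 ≤ t →
      HasDerivAt V (∑ i, 2 * u i t * -(∑ j, G i j * u j t)) t := by
    intro t ht
    apply HasDerivAt.fun_sum
    intro i _
    have := (hud i t ht).fun_pow 2
    simpa [mul_comm, mul_assoc, mul_left_comm] using this
  set g : ℝ → ℝ := fun t => V t * Real.exp (2 * clam * t) with hg
  have hgd : ∀ t : ℝ, 0 ≤ t → HasDerivAt g
      ((∑ i, 2 * u i t * -(∑ j, G i j * u j t)) * Real.exp (2 * clam * t)
        + V t * (Real.exp (2 * clam * t) * (2 * clam))) t := by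
    intro t ht
    have he : HasDerivAt (fun t => Real.exp (2 * clam * t))
        (Real.exp (2 * clam * t) * (2 * clam)) t := by
      simpa [mul_comm] using (((hasDerivAt_id t).const_mul (2 * clam)).exp)
    exact (hVd t ht).mul he
  have hgnonpos : ∀ t : ℝ, 0 ≤ t →
      (∑ i, 2 * u i t * -(∑ j, G i j * u j t)) * Real.exp (2 * clam * t)
        + V t * (Real.exp (2 * clam * t) * (2 * clam)) ≤ 0 := by
    intro t ht
    have h1 : (∑ i, 2 * u i t * -(∑ j, G i j * u j t))
        = -2 * ∑ i, u i t * ∑ j, G i j * u j t := by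
      rw [Finset.mul_sum]; apply Finset.sum_congr rfl; intro i _; ring
    have h2 := hlow (fun i => u i t)
    have hexp : 0 < Real.exp (2 * clam * t) := Real.exp_pos _
    rw [h1]
    have : -2 * (∑ i, u i t * ∑ j, G i j * u j t) + V t * (2 * clam) ≤ 0 := by
      have := mul_le_mul_of_nonneg_left h2 (by norm_num : (0:ℝ) ≤ 2)
      simp only [hV]; nlinarith
    calc -2 * (∑ i, u i t * ∑ j, G i j * u j t) * Real.exp (2 * clam * t)
          + V t * (Real.exp (2 * clam * t) * (2 * clam))
        = (-2 * (∑ i, u i t * ∑ j, G i j * u j t) + V t * (2 * clam))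
            * Real.exp (2 * clam * t) := by ring
      _ ≤ 0 := mul_nonpos_of_nonpos_of_nonneg this hexp.le
  have hanti : AntitoneOn g (Set.Ici 0) := by
    apply antitoneOn_of_deriv_nonpos (convex_Ici 0)
    · intro t ht
      exact ((hgd t ht).continuousAt).continuousWithinAt
    · intro t ht
      rw [interior_Ici] at ht
      exact (hgd t ht.le).differentiableAt.differentiableWithinAt
    · intro t ht
      rw [interior_Ici] at ht
      rw [(hgd t ht.le).deriv]
      exact hgnonpos t ht.le
  have hVbound : ∀ t : ℝ, 0 ≤ t → V t ≤ V 0 * Real.exp (-(2 * clam * t)) := by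
    intro t ht
    have := hanti (Set.mem_Ici.2 le_rfl) ht ht
    have hg0 : g 0 = V 0 := by simp [hg]
    rw [hg0] at this
    have hexp : 0 < Real.exp (2 * clam * t) := Real.exp_pos _
    rw [Real.exp_neg]
    have : V t * Real.exp (2 * clam * t) ≤ V 0 := by simpa [hg] using this
    calc V t = V t * Real.exp (2 * clam * t) * (Real.exp (2 * clam * t))⁻¹ := by
          field_simp
      _ ≤ V 0 * (Real.exp (2 * clam * t))⁻¹ :=
          mul_le_mul_of_nonneg_right this (by positivity)
  have hVtend : Tendsto V atTop (𝓝 0) := by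
    have hupper : Tendsto (fun t => V 0 * Real.exp (-(2 * clam * t))) atTop (𝓝 0) := by
      have h1 : Tendsto (fun t : ℝ => -(2 * clam * t)) atTop atBot := by
        apply tendsto_neg_atBot_iff.mpr
        exact Tendsto.const_mul_atTop (by positivity) tendsto_id
      have := Real.tendsto_exp_atBot.comp h1
      simpa using this.const_mul (V 0)
    apply squeeze_zero' (Filter.eventually_atTop.2 ⟨0, fun t ht => by positivity⟩)
      (Filter.eventually_atTop.2 ⟨0, fun t ht => hVbound t ht⟩) hupper
  intro j
  have habs : Tendsto (fun t => |u j t|) atTop (𝓝 0) := by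
    have hsq : Tendsto (fun t => u j t ^ 2) atTop (𝓝 0) := by
      apply squeeze_zero (fun t => sq_nonneg _) (fun t => ?_) hVtend
      exact Finset.single_le_sum (f := fun i => u i t ^ 2) (fun i _ => sq_nonneg _)
        (Finset.mem_univ j)
    have h2 := (Real.continuous_sqrt.tendsto 0).comp hsq
    have h3 : ((fun x => Real.sqrt x) ∘ fun t => u j t ^ 2) = fun t => |u j t| := by
      funext t; simp [Function.comp, Real.sqrt_sq_eq_abs]
    rw [h3] at h2
    simpa using h2
  exact tendsto_zero_iff_abs_tendsto_zero _ |>.mpr habs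


/-- Convergence of the MSE kernel gradient flow to the kernel (ridgeless) regression
solution: with a symmetric positive definite Gram matrix `G`, the flow started at `h₀`
converges pointwise to `h₀(x) + ∑ᵢⱼ k(x, xᵢ)(G⁻¹)ᵢⱼ(Yⱼ - h₀(xⱼ))`. -/
theorem stmt9 {Ω : Type*} {n : ℕ} (k : Ω → Ω → ℝ) (x : Fin n → Ω)
    (Y : Fin n → ℝ)
    (G : Matrix (Fin n) (Fin n) ℝ) (hG : ∀ i j, G i j = k (x i) (x j))
    (hGpd : G.PosDef)
    (h₀ : Ω → ℝ) (h : Ω → ℝ → ℝ)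
    (hinit : ∀ x' : Ω, h x' 0 = h₀ x')
    (hflow : ∀ (x' : Ω) (t : ℝ), 0 ≤ t →
      HasDerivAt (h x') (-(∑ i, k x' (x i) * (h (x i) t - Y i))) t) :
    ∀ x' : Ω, Tendsto (h x') atTop
      (𝓝 (h₀ x' + ∑ i, ∑ j, k x' (x i) * G⁻¹ i j * (Y j - h₀ (x j)))) := by
  have hudG : ∀ (i : Fin n) (t : ℝ), 0 ≤ t →
      HasDerivAt (fun t => h (x i) t - Y i) (-(∑ j, G i j * (h (x j) t - Y j))) t := by
    intro i t ht
    have := (hflow (x i) t ht).sub_const (Y i)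
    refine this.congr_deriv ?_
    congr 1
    apply Finset.sum_congr rfl
    intro j _
    rw [hG]
  obtain ⟨clam, hclam, hlow⟩ := exists_pos_lower G hGpd
  have hu0 : ∀ j, Tendsto (fun t => h (x j) t - Y j) atTop (𝓝 0) :=
    flow_tendsto_zero G (fun i t => h (x i) t - Y i) hudG clam hclam hlow
  intro x'
  set u : Fin n → ℝ → ℝ := fun i t => h (x i) t - Y i with hu
  have hud : ∀ (i : Fin n) (t : ℝ), 0 ≤ t →
      HasDerivAt (u i) (-(∑ j, G i j * u j t)) t := by
    intro i t ht
    have := (hflow (x i) t ht).sub_const (Y i)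
    refine this.congr_deriv ?_
    congr 1
    apply Finset.sum_congr rfl
    intro j _
    rw [hG]
  set c : Fin n → Fin n → ℝ := fun i j => k x' (x i) * G⁻¹ i j with hc
  have hGinv : G⁻¹ * G = 1 :=
    Matrix.nonsing_inv_mul G (isUnit_iff_ne_zero.2 hGpd.det_pos.ne')
  -- key algebraic identity
  have key : ∀ w : Fin n → ℝ,
      ∑ i, ∑ j, c i j * ∑ l, G j l * w l = ∑ i, k x' (x i) * w i := by
    intro w
    apply Finset.sum_congr rfl
    intro i _
    have h1 : ∀ l, ∑ j, G⁻¹ i j * G j l = (1 : Matrix (Fin n) (Fin n) ℝ) i l := by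
      intro l; rw [← hGinv, Matrix.mul_apply]
    calc ∑ j, c i j * ∑ l, G j l * w l
        = k x' (x i) * ∑ l, (∑ j, G⁻¹ i j * G j l) * w l := by
          simp only [hc, Finset.mul_sum, Finset.sum_mul]
          rw [Finset.sum_comm]
          apply Finset.sum_congr rfl
          intro l _
          apply Finset.sum_congr rfl
          intro j _
          ring
      _ = k x' (x i) * w i := by
          simp [h1, Matrix.one_apply]
  -- the conserved quantity
  set φ : ℝ → ℝ := fun t => h x' t - ∑ i, ∑ j, c i j * u j t with hφ
  have hφd : ∀ t : ℝ, 0 ≤ t → HasDerivAt φ 0 t := by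
    intro t ht
    have hS : HasDerivAt (fun t => ∑ i, ∑ j, c i j * u j t)
        (∑ i, ∑ j, c i j * -(∑ l, G j l * u l t)) t :=
      HasDerivAt.fun_sum fun i _ => HasDerivAt.fun_sum fun j _ => (hud j t ht).const_mul (c i j)
    have hh := hflow x' t ht
    have := hh.sub hS
    refine this.congr_deriv ?_
    have : ∑ i, ∑ j, c i j * -(∑ l, G j l * u l t)
        = -(∑ i, ∑ j, c i j * ∑ l, G j l * u l t) := by
      rw [← Finset.sum_neg_distrib]
      apply Finset.sum_congr rfl
      intro i _
      rw [← Finset.sum_neg_distrib]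
      apply Finset.sum_congr rfl
      intro j _
      ring
    rw [this, key (fun l => u l t)]
    simp [hu]
  -- φ is constant on [0, ∞)
  have hφconst : ∀ t : ℝ, 0 ≤ t → φ t = φ 0 := by
    intro t ht
    have := constant_of_has_deriv_right_zero (f := φ) (a := 0) (b := t)
      (fun s hs => ((hφd s hs.1).continuousAt).continuousWithinAt)
      (fun s hs => (hφd s hs.1).hasDerivWithinAt)
    exact this t ⟨ht, le_refl t⟩
  -- representation of h x'
  set L : ℝ := h₀ x' + ∑ i, ∑ j, k x' (x i) * G⁻¹ i j * (Y j - h₀ (x j)) with hL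
  have hφ0 : φ 0 = L := by
    rw [hφ, hL]
    simp only [hu, hinit]
    rw [sub_eq_add_neg, ← Finset.sum_neg_distrib]
    congr 1
    apply Finset.sum_congr rfl
    intro i _
    rw [← Finset.sum_neg_distrib]
    apply Finset.sum_congr rfl
    intro j _
    rw [hc]
    ring
  have hrep : ∀ t : ℝ, 0 ≤ t → h x' t = L + ∑ i, ∑ j, c i j * u j t := by
    intro t ht
    have := hφconst t ht
    rw [hφ0] at this
    simp only [hφ] at this
    linarith
  have hsum0 : Tendsto (fun t => ∑ i, ∑ j, c i j * u j t) atTop (𝓝 0) := by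
    have : Tendsto (fun t => ∑ i, ∑ j, c i j * u j t) atTop (𝓝 (∑ i : Fin n, ∑ j : Fin n, (0:ℝ))) := by
      apply tendsto_finset_sum
      intro i _
      apply tendsto_finset_sum
      intro j _
      simpa using (hu0 j).const_mul (c i j)
    simpa using this
  have : Tendsto (fun t => L + ∑ i, ∑ j, c i j * u j t) atTop (𝓝 (L + 0)) :=
    tendsto_const_nhds.add hsum0
  rw [add_zero] at this
  apply this.congr'
  filter_upwards [Filter.eventually_ge_atTop (0:ℝ)] with t ht
  exact (hrep t ht).symm
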